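/- If T: E → F is an almost interval preserving operator between Banach lattices and A is an almost limited subset of E, then T(A) is an almost limited subset of F. -/

import Mathlib

open Filter Topology Pointwise

variable {E F G X : Type*}

section Defs

variable [NormedAddCommGroup E] [Lattice E] [IsOrderedAddMonoid E] [HasSolidNorm E] [NormedSpace ℝ E]

/-- `|f|` of a functional evaluated at `x ≥ 0`: `sup {f y : |y| ≤ x}`. -/
noncomputable def absEval (f : E →L[ℝ] ℝ) (x : E) : ℝ :=
  ⨆ y : {y : E // |y| ≤ x}, f y.1

/-- `|f| ⊓ |g| = 0` in the dual lattice, via the Riesz-Kantorovich formula. -/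
def DisjointPair (f g : E →L[ℝ] ℝ) : Prop :=
  ∀ x : E, 0 ≤ x →
    (⨅ y : {y : E // 0 ≤ y ∧ y ≤ x}, (absEval f y.1 + absEval g (x - y.1))) = 0

/-- A pairwise disjoint sequence of functionals. -/
def DisjointSeqDual (f : ℕ → E →L[ℝ] ℝ) : Prop :=
  ∀ n m, n ≠ m → DisjointPair (f n) (f m)

/-- A weakly null sequence in a normed space. -/
def WeaklyNullSeq {Y : Type*} [NormedAddCommGroup Y] [NormedSpace ℝ Y] (y : ℕ → Y) : Prop :=
  ∀ φ : Y →L[ℝ] ℝ, Tendsto (fun n => φ (y n)) atTop (𝓝 0)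

/-- An almost Dunford-Pettis set: disjoint weakly null sequences in the dual converge
uniformly to zero on it. -/
def AlmostDPSet (A : Set E) : Prop :=
  ∀ f : ℕ → E →L[ℝ] ℝ, DisjointSeqDual f → WeaklyNullSeq f →
    Tendsto (fun n => ⨆ a : A, |f n a.1|) atTop (𝓝 0)

end Defs

variable [NormedAddCommGroup E] [Lattice E] [IsOrderedAddMonoid E] [HasSolidNorm E] [NormedSpace ℝ E]
  [NormedAddCommGroup F] [Lattice F] [IsOrderedAddMonoid F] [HasSolidNorm F] [NormedSpace ℝ F] in
/-- An almost interval preserving operator: positive, with `T[0,x]` dense in `[0,Tx]`. -/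
def AlmostIntervalPreserving (T : E →L[ℝ] F) : Prop :=
  (∀ x : E, 0 ≤ x → 0 ≤ T x) ∧
    ∀ x : E, 0 ≤ x → Set.Icc (0 : F) (T x) ⊆ closure (T '' Set.Icc 0 x)

variable [NormedAddCommGroup E] [Lattice E] [IsOrderedAddMonoid E] [HasSolidNorm E] [NormedSpace ℝ E] in
/-- A weak* null sequence of functionals. -/
def WeakStarNull (f : ℕ → E →L[ℝ] ℝ) : Prop :=
  ∀ x : E, Tendsto (fun n => f n x) atTop (𝓝 0)

variable [NormedAddCommGroup E] [Lattice E] [IsOrderedAddMonoid E] [HasSolidNorm E] [NormedSpace ℝ E] in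
/-- An almost limited set: disjoint weak* null sequences in the dual converge uniformly
to zero on it. -/
def AlmostLimitedSet (A : Set E) : Prop :=
  ∀ f : ℕ → E →L[ℝ] ℝ, DisjointSeqDual f → WeakStarNull f →
    Tendsto (fun n => ⨆ a : A, |f n a.1|) atTop (𝓝 0)

section Aux

variable [NormedAddCommGroup E] [Lattice E] [IsOrderedAddMonoid E] [HasSolidNorm E] [NormedSpace ℝ E]
  [NormedAddCommGroup F] [Lattice F] [IsOrderedAddMonoid F] [HasSolidNorm F] [NormedSpace ℝ F]

lemma absEval_bddAbove (f : E →L[ℝ] ℝ) (x : E) :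
    BddAbove (Set.range fun y : {y : E // |y| ≤ x} => f y.1) := by
  refine ⟨‖f‖ * ‖x‖, ?_⟩
  rintro r ⟨⟨y, hy⟩, rfl⟩
  have hx0 : 0 ≤ x := le_trans (abs_nonneg y) hy
  have hnorm : ‖y‖ ≤ ‖x‖ :=
    norm_le_norm_of_abs_le_abs (by rwa [abs_of_nonneg hx0])
  calc f y ≤ |f y| := le_abs_self _
    _ = ‖f y‖ := (Real.norm_eq_abs _).symm
    _ ≤ ‖f‖ * ‖y‖ := f.le_opNorm y
    _ ≤ ‖f‖ * ‖x‖ := mul_le_mul_of_nonneg_left hnorm (norm_nonneg f)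

lemma absEval_nonneg (f : E →L[ℝ] ℝ) {x : E} (hx : 0 ≤ x) : 0 ≤ absEval f x := by
  have h := le_ciSup (absEval_bddAbove f x)
    (⟨0, by simpa using hx⟩ : {y : E // |y| ≤ x})
  exact (map_zero f).symm.le.trans h

lemma absEval_le_norm (f : E →L[ℝ] ℝ) (x : E) : absEval f x ≤ ‖f‖ * ‖x‖ := by
  refine Real.iSup_le (fun y => ?_) (mul_nonneg (norm_nonneg f) (norm_nonneg x))
  obtain ⟨y, hy⟩ := y
  have hx0 : 0 ≤ x := le_trans (abs_nonneg y) hy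
  have hnorm : ‖y‖ ≤ ‖x‖ :=
    norm_le_norm_of_abs_le_abs (by rwa [abs_of_nonneg hx0])
  calc f y ≤ |f y| := le_abs_self _
    _ = ‖f y‖ := (Real.norm_eq_abs _).symm
    _ ≤ ‖f‖ * ‖y‖ := f.le_opNorm y
    _ ≤ ‖f‖ * ‖x‖ := mul_le_mul_of_nonneg_left hnorm (norm_nonneg f)

lemma absEval_mono (f : E →L[ℝ] ℝ) {a b : E} (hb : 0 ≤ b) (hab : a ≤ b) :
    absEval f a ≤ absEval f b := by
  refine Real.iSup_le (fun y => ?_) (absEval_nonneg f hb)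
  exact le_ciSup (absEval_bddAbove f b) ⟨y.1, y.2.trans hab⟩

lemma absEval_add_le (f : E →L[ℝ] ℝ) {a b : E} (ha : 0 ≤ a) (hb : 0 ≤ b) :
    absEval f (a + b) ≤ absEval f a + absEval f b := by
  refine Real.iSup_le (fun z => ?_)
    (add_nonneg (absEval_nonneg f ha) (absEval_nonneg f hb))
  obtain ⟨z, hz⟩ := z
  obtain ⟨hz2, hz1'⟩ := abs_le'.mp hz
  -- hz2 : z ≤ a + b,  hz1' : -z ≤ a + b
  set z₁ := (z ⊔ (-a)) ⊓ a with hz₁def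
  have hna : -a ≤ z₁ := le_inf le_sup_right (neg_le_self ha)
  have h1 : |z₁| ≤ a := abs_le'.mpr ⟨inf_le_right, neg_le.mp hna⟩
  have hzb : z - b ≤ z₁ := by
    refine le_inf (le_trans (sub_le_self z hb) le_sup_left) ?_
    exact sub_le_iff_le_add.mpr hz2
  have hsup : z ⊔ -a ≤ z + b := by
    refine sup_le (le_add_of_nonneg_right hb) ?_
    have hab : -a - b ≤ z := by
      have : -(a + b) ≤ z := neg_le.mp hz1'
      rwa [neg_add, ← sub_eq_add_neg] at this
    exact sub_le_iff_le_add.mp hab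
  have hzb' : z₁ ≤ z + b := inf_le_left.trans hsup
  have h2 : |z - z₁| ≤ b := by
    refine abs_le'.mpr ⟨?_, ?_⟩
    · exact sub_le_iff_le_add'.mpr (sub_le_iff_le_add.mp hzb)
    · rw [neg_sub]
      have : z₁ ≤ b + z := by rwa [add_comm] at hzb'
      exact sub_le_iff_le_add.mpr this
  have hfz : f z = f z₁ + f (z - z₁) := by
    rw [← map_add]; congr 1; abel
  calc f z = f z₁ + f (z - z₁) := hfz
    _ ≤ absEval f a + absEval f b :=
      add_le_add (le_ciSup (absEval_bddAbove f a) ⟨z₁, h1⟩)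
        (le_ciSup (absEval_bddAbove f b) ⟨z - z₁, h2⟩)

lemma absEval_comp_le {T : E →L[ℝ] F} (hTpos : ∀ x : E, 0 ≤ x → 0 ≤ T x)
    (f : F →L[ℝ] ℝ) {y : E} (hy : 0 ≤ y) :
    absEval (f.comp T) y ≤ absEval f (T y) := by
  refine Real.iSup_le (fun z => ?_) (absEval_nonneg f (hTpos y hy))
  obtain ⟨z, hz⟩ := z
  obtain ⟨h2, h1⟩ := abs_le'.mp hz
  -- h2 : z ≤ y,  h1 : -z ≤ y
  have hTz : |T z| ≤ T y := by
    refine abs_le'.mpr ⟨?_, ?_⟩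
    · have h0 : (0 : E) ≤ y - z := sub_nonneg.mpr h2
      have h := hTpos _ h0
      rw [map_sub, sub_nonneg] at h
      exact h
    · have h0 : (0 : E) ≤ y + z := by
        have := add_le_add_right h1 z
        rw [add_comm]; simpa using this
      have h := hTpos _ h0
      rw [map_add] at h
      rw [← sub_nonneg, sub_neg_eq_add]
      exact h
  exact le_ciSup (absEval_bddAbove f (T y)) ⟨T z, hTz⟩

lemma disjointPair_comp {T : E →L[ℝ] F} (hT : AlmostIntervalPreserving T)
    {f g : F →L[ℝ] ℝ} (hfg : DisjointPair f g) :
    DisjointPair (f.comp T) (g.comp T) := by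
  intro x hx
  have hTx : 0 ≤ T x := hT.1 x hx
  have hterm : ∀ y : {y : E // 0 ≤ y ∧ y ≤ x},
      0 ≤ absEval (f.comp T) y.1 + absEval (g.comp T) (x - y.1) := fun y =>
    add_nonneg (absEval_nonneg _ y.2.1) (absEval_nonneg _ (sub_nonneg.mpr y.2.2))
  refine le_antisymm ?_ (Real.iInf_nonneg hterm)
  refine le_of_forall_pos_le_add (fun ε hε => ?_)
  rw [zero_add]
  -- find v in [0, Tx] with small sum
  have hinf := hfg (T x) hTx
  have hv : ∃ v : {v : F // 0 ≤ v ∧ v ≤ T x},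
      absEval f v.1 + absEval g (T x - v.1) < ε / 2 := by
    by_contra hcon
    push_neg at hcon
    have : Nonempty {v : F // 0 ≤ v ∧ v ≤ T x} := ⟨⟨0, le_refl 0, hTx⟩⟩
    have h := le_ciInf hcon
    rw [hinf] at h
    linarith
  obtain ⟨⟨v, hv0, hvTx⟩, hvsmall'⟩ := hv
  have hvsmall : absEval f v + absEval g (T x - v) < ε / 2 := hvsmall'
  -- density: approximate v by T y with y ∈ [0, x]
  obtain ⟨δ, hδdef⟩ : ∃ δ : ℝ, δ = (ε / 2) / (‖f‖ + ‖g‖ + 1) := ⟨_, rfl⟩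
  have hS : (0 : ℝ) < ‖f‖ + ‖g‖ + 1 := by positivity
  have hδ : 0 < δ := by rw [hδdef]; positivity
  have hvmem : v ∈ closure (T '' Set.Icc 0 x) := hT.2 x hx ⟨hv0, hvTx⟩
  obtain ⟨w, hw, hdist⟩ := Metric.mem_closure_iff.mp hvmem δ hδ
  obtain ⟨y, hy, rfl⟩ := hw
  have hdist' : ‖v - T y‖ < δ := by rwa [dist_eq_norm] at hdist
  have hy0 : 0 ≤ y := hy.1
  have hyx : y ≤ x := hy.2
  -- estimates
  have habs1 : absEval f |T y - v| ≤ ‖f‖ * δ := by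
    calc absEval f |T y - v| ≤ ‖f‖ * ‖|T y - v|‖ := absEval_le_norm f _
      _ = ‖f‖ * ‖T y - v‖ := by rw [norm_abs_eq_norm]
      _ ≤ ‖f‖ * δ := by
          refine mul_le_mul_of_nonneg_left ?_ (norm_nonneg f)
          rw [norm_sub_rev]; exact le_of_lt hdist'
  have habs2 : absEval g |v - T y| ≤ ‖g‖ * δ := by
    calc absEval g |v - T y| ≤ ‖g‖ * ‖|v - T y|‖ := absEval_le_norm g _
      _ = ‖g‖ * ‖v - T y‖ := by rw [norm_abs_eq_norm]
      _ ≤ ‖g‖ * δ := mul_le_mul_of_nonneg_left (le_of_lt hdist') (norm_nonneg g)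
  have h1 : absEval (f.comp T) y ≤ absEval f v + ‖f‖ * δ := by
    have step1 : absEval (f.comp T) y ≤ absEval f (T y) := absEval_comp_le hT.1 f hy0
    have hle : T y ≤ v + |T y - v| := by
      have := le_abs_self (T y - v)
      calc T y = v + (T y - v) := by abel
        _ ≤ v + |T y - v| := add_le_add_right this v
    have step2 : absEval f (T y) ≤ absEval f (v + |T y - v|) :=
      absEval_mono f (add_nonneg hv0 (abs_nonneg _)) hle
    have step3 : absEval f (v + |T y - v|) ≤ absEval f v + absEval f |T y - v| :=
      absEval_add_le f hv0 (abs_nonneg _)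
    linarith
  have h2 : absEval (g.comp T) (x - y) ≤ absEval g (T x - v) + ‖g‖ * δ := by
    have hx_y : (0 : E) ≤ x - y := sub_nonneg.mpr hyx
    have step1 : absEval (g.comp T) (x - y) ≤ absEval g (T (x - y)) :=
      absEval_comp_le hT.1 g hx_y
    have hTxy : T (x - y) = T x - T y := map_sub T x y
    have hle : T x - T y ≤ (T x - v) + |v - T y| := by
      have := le_abs_self (v - T y)
      calc T x - T y = (T x - v) + (v - T y) := by abel
        _ ≤ (T x - v) + |v - T y| := add_le_add_right this _
    have step2 : absEval g (T x - T y) ≤ absEval g ((T x - v) + |v - T y|) :=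
      absEval_mono g (add_nonneg (sub_nonneg.mpr hvTx) (abs_nonneg _)) hle
    have step3 : absEval g ((T x - v) + |v - T y|) ≤ absEval g (T x - v) + absEval g |v - T y| :=
      absEval_add_le g (sub_nonneg.mpr hvTx) (abs_nonneg _)
    rw [hTxy] at step1
    linarith
  -- conclude
  have hbdd : BddBelow (Set.range fun y : {y : E // 0 ≤ y ∧ y ≤ x} =>
      absEval (f.comp T) y.1 + absEval (g.comp T) (x - y.1)) :=
    ⟨0, by rintro r ⟨i, rfl⟩; exact hterm i⟩
  have hkey : (⨅ y : {y : E // 0 ≤ y ∧ y ≤ x},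
        (absEval (f.comp T) y.1 + absEval (g.comp T) (x - y.1)))
      ≤ absEval (f.comp T) y + absEval (g.comp T) (x - y) :=
    ciInf_le hbdd (⟨y, hy0, hyx⟩ : {y : E // 0 ≤ y ∧ y ≤ x})
  have hδbound : (‖f‖ + ‖g‖) * δ ≤ ε / 2 := by
    have : (‖f‖ + ‖g‖) * δ ≤ (‖f‖ + ‖g‖ + 1) * δ :=
      mul_le_mul_of_nonneg_right (by linarith) (le_of_lt hδ)
    have heq : (‖f‖ + ‖g‖ + 1) * δ = ε / 2 := by
      rw [hδdef]; field_simp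
    linarith
  calc (⨅ y : {y : E // 0 ≤ y ∧ y ≤ x},
        (absEval (f.comp T) y.1 + absEval (g.comp T) (x - y.1)))
      ≤ absEval (f.comp T) y + absEval (g.comp T) (x - y) := hkey
    _ ≤ (absEval f v + absEval g (T x - v)) + (‖f‖ + ‖g‖) * δ := by
        have : (‖f‖ + ‖g‖) * δ = ‖f‖ * δ + ‖g‖ * δ := by ring
        rw [this]; linarith
    _ ≤ ε / 2 + ε / 2 := by linarith
    _ = ε := by ring

end Aux

/-- Almost interval preserving operators map almost limited sets to almost limited sets. -/
theorem almostIntervalPreserving_image_almostLimited [NormedAddCommGroup E] [Lattice E] [IsOrderedAddMonoid E] [HasSolidNorm E] [NormedSpace ℝ E] [PosSMulStrictMono ℝ E] [PosSMulReflectLT ℝ E] [CompleteSpace E] [NormedAddCommGroup F] [Lattice F] [IsOrderedAddMonoid F] [HasSolidNorm F] [NormedSpace ℝ F] [PosSMulStrictMono ℝ F] [PosSMulReflectLT ℝ F] [CompleteSpace F]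
    (T : E →L[ℝ] F) (hT : AlmostIntervalPreserving T)
    (A : Set E) (hA : AlmostLimitedSet A) : AlmostLimitedSet (T '' A) := by
  intro f hdisj hnull
  set g : ℕ → E →L[ℝ] ℝ := fun n => (f n).comp T with hg
  have hgd : DisjointSeqDual g := fun n m hnm => disjointPair_comp hT (hdisj n m hnm)
  have hgn : WeakStarNull g := fun x => hnull (T x)
  have hmain := hA g hgd hgn
  have heq : ∀ n, (⨆ a : ↥(T '' A), |f n a.1|) = ⨆ a : ↥A, |g n a.1| := by
    intro n
    have hrange : (Set.range fun b : ↥(T '' A) => |f n b.1|) =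
        Set.range fun a : ↥A => |g n a.1| := by
      ext r
      constructor
      · rintro ⟨⟨b, a, ha, rfl⟩, rfl⟩; exact ⟨⟨a, ha⟩, rfl⟩
      · rintro ⟨⟨a, ha⟩, rfl⟩; exact ⟨⟨T a, a, ha, rfl⟩, rfl⟩
    simp only [iSup]
    rw [hrange]
  simpa only [heq] using hmain
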